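/- Let A be a monotone non-increasing allocation rule with A_t ∈ (0,1] for all t. Define P*_K(A) = c_K and, for t < K, P*_t(A) = c_t + Σ_{j=t+1}^K (A_j/A_t)(c_j − c_{j−1}). Then the mechanism (A, P*(A)) is truthful and individually rational. -/

import Mathlib

/-- The mechanism `(A, P*(A))` with the canonical payments `P*` is
truthful and individually rational. Costs are indexed by `{1, …, K}`. -/
theorem Pstar_mechanism_truthful_IR
    (K : ℕ) (hK : 1 ≤ K) (c A Pstar : ℕ → ℝ)
    (hc1 : 0 < c 1)
    (hcmono : ∀ j ∈ Finset.Icc 1 (K - 1), c j < c (j + 1))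
    (hApos : ∀ t ∈ Finset.Icc 1 K, 0 < A t)
    (hAle1 : ∀ t ∈ Finset.Icc 1 K, A t ≤ 1)
    (hAmono : ∀ j ∈ Finset.Icc 1 (K - 1), A (j + 1) ≤ A j)
    (hPstar : ∀ t ∈ Finset.Icc 1 K,
      Pstar t = c t + ∑ j ∈ Finset.Icc (t + 1) K, (A j / A t) * (c j - c (j - 1))) :
    (∀ t ∈ Finset.Icc 1 K, ∀ s ∈ Finset.Icc 1 K,
      (Pstar s - c t) * A s ≤ (Pstar t - c t) * A t) ∧
    (∀ t ∈ Finset.Icc 1 K, c t ≤ Pstar t) := by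
  have hcstep : ∀ j, 1 ≤ j → j + 1 ≤ K → c j < c (j + 1) := fun j h1 h2 =>
    hcmono j (Finset.mem_Icc.mpr ⟨h1, by omega⟩)
  have hAstep : ∀ j, 1 ≤ j → j + 1 ≤ K → A (j + 1) ≤ A j := fun j h1 h2 =>
    hAmono j (Finset.mem_Icc.mpr ⟨h1, by omega⟩)
  have hcle : ∀ i j, 1 ≤ i → i ≤ j → j ≤ K → c i ≤ c j := by
    intro i j h1 hij
    induction j, hij using Nat.le_induction with
    | base => exact fun _ => le_refl _
    | succ m hm ih =>
      intro hmK
      exact le_trans (ih (by omega)) (le_of_lt (hcstep m (by omega) hmK))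
  have hAle : ∀ i j, 1 ≤ i → i ≤ j → j ≤ K → A j ≤ A i := by
    intro i j h1 hij
    induction j, hij using Nat.le_induction with
    | base => exact fun _ => le_refl _
    | succ m hm ih =>
      intro hmK
      exact le_trans (hAstep m (by omega) hmK) (ih (by omega))
  set d : ℕ → ℝ := fun j => c j - c (j - 1) with hd
  have hdnonneg : ∀ j, 2 ≤ j → j ≤ K → 0 ≤ d j := by
    intro j h2 hjK
    have : c (j - 1) ≤ c j := by
      have := hcle (j - 1) j (by omega) (by omega) hjK
      exact this
    simp only [hd]; linarith
  -- telescoping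
  have tele : ∀ s t : ℕ, s ≤ t → ∑ j ∈ Finset.Ioc s t, d j = c t - c s := by
    intro s t hst
    induction t, hst using Nat.le_induction with
    | base => simp
    | succ m hm ih =>
      rw [← Finset.Icc_add_one_left_eq_Ioc, Finset.sum_Icc_succ_top (by omega : s + 1 ≤ m + 1),
        Finset.Icc_add_one_left_eq_Ioc, ih]
      simp only [hd, Nat.add_sub_cancel]
      ring
  -- utility formula
  have hU : ∀ t, 1 ≤ t → t ≤ K →
      (Pstar t - c t) * A t = ∑ j ∈ Finset.Ioc t K, A j * d j := by
    intro t h1 h2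
    rw [hPstar t (Finset.mem_Icc.mpr ⟨h1, h2⟩)]
    rw [add_sub_cancel_left, Finset.sum_mul, ← Finset.Icc_add_one_left_eq_Ioc]
    refine Finset.sum_congr rfl fun j hj => ?_
    have hAt := hApos t (Finset.mem_Icc.mpr ⟨h1, h2⟩)
    field_simp
    rfl
  -- IR
  have hIR : ∀ t ∈ Finset.Icc 1 K, c t ≤ Pstar t := by
    intro t ht
    obtain ⟨h1, h2⟩ := Finset.mem_Icc.mp ht
    rw [hPstar t ht]
    have : 0 ≤ ∑ j ∈ Finset.Icc (t + 1) K, (A j / A t) * (c j - c (j - 1)) := by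
      refine Finset.sum_nonneg fun j hj => ?_
      obtain ⟨hj1, hj2⟩ := Finset.mem_Icc.mp hj
      have hAj : 0 < A j := hApos j (Finset.mem_Icc.mpr ⟨by omega, hj2⟩)
      have hAt : 0 < A t := hApos t ht
      have hdj : 0 ≤ d j := hdnonneg j (by omega) hj2
      exact mul_nonneg (le_of_lt (div_pos hAj hAt)) hdj
    linarith
  refine ⟨?_, hIR⟩
  intro t ht s hs
  obtain ⟨ht1, ht2⟩ := Finset.mem_Icc.mp ht
  obtain ⟨hs1, hs2⟩ := Finset.mem_Icc.mp hs
  have key : (Pstar s - c t) * A s = (Pstar s - c s) * A s + (c s - c t) * A s := by ring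
  rw [key, hU s hs1 hs2, hU t ht1 ht2]
  rcases lt_trichotomy t s with hlt | heq | hgt
  · -- t < s : over-reporting
    have hsplit := Finset.sum_Ioc_consecutive (fun j => A j * d j)
      (le_of_lt hlt) hs2
    -- ∑ Ioc t s + ∑ Ioc s K = ∑ Ioc t K
    have hbound : (c s - c t) * A s ≤ ∑ j ∈ Finset.Ioc t s, A j * d j := by
      have htel := tele t s (le_of_lt hlt)
      calc (c s - c t) * A s = ∑ j ∈ Finset.Ioc t s, A s * d j := by
            rw [← Finset.mul_sum, htel]; ring
        _ ≤ ∑ j ∈ Finset.Ioc t s, A j * d j := by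
            refine Finset.sum_le_sum fun j hj => ?_
            obtain ⟨hj1, hj2⟩ := Finset.mem_Ioc.mp hj
            have hdj : 0 ≤ d j := hdnonneg j (by omega) (by omega)
            have hAj : A s ≤ A j := hAle j s (by omega) hj2 hs2
            exact mul_le_mul_of_nonneg_right hAj hdj
    linarith [hsplit]
  · subst heq; linarith
  · -- s < t : under-reporting
    have hsplit := Finset.sum_Ioc_consecutive (fun j => A j * d j)
      (le_of_lt hgt) ht2
    have hbound : ∑ j ∈ Finset.Ioc s t, A j * d j ≤ (c t - c s) * A s := by
      have htel := tele s t (le_of_lt hgt)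
      calc ∑ j ∈ Finset.Ioc s t, A j * d j
          ≤ ∑ j ∈ Finset.Ioc s t, A s * d j := by
            refine Finset.sum_le_sum fun j hj => ?_
            obtain ⟨hj1, hj2⟩ := Finset.mem_Ioc.mp hj
            have hdj : 0 ≤ d j := hdnonneg j (by omega) (by omega)
            have hAj : A j ≤ A s := hAle s j hs1 (by omega) (by omega)
            exact mul_le_mul_of_nonneg_right hAj hdj
        _ = (c t - c s) * A s := by rw [← Finset.mul_sum, htel]; ring
    linarith [hsplit]
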